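/- arXiv:2005.04707 — 2 statements merged into one kernel-verified Lean document; each statement's English description precedes it below -/
import Mathlib

section
/- Let n be a positive integer and let g ∈ ℝⁿ satisfy g_i ≥ 0 for all i. Then the function F(p) = √( Σ_{i=1}^n (1 − (1 + g_i p_i)^{−2}) ) is concave on the nonnegative orthant {p ∈ ℝⁿ : p_i ≥ 0 for all i}. (Equivalently, −F is convex, so the dispersion penalty V̄ = a·Q^{−1}(ε)·F is concave for any a·Q^{−1}(ε) ≥ 0.) -/
open Set

/-- Square root of a nonnegative concave function is concave. -/
lemma concaveOn_sqrt_comp {E : Type*} [AddCommGroup E] [Module ℝ E]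
    {s : Set E} {f : E → ℝ} (hf : ConcaveOn ℝ s f) (h0 : ∀ x ∈ s, 0 ≤ f x) :
    ConcaveOn ℝ s (fun x => Real.sqrt (f x)) := by
  refine ⟨hf.1, fun x hx y hy a b ha hb hab => ?_⟩
  have hsq := (Real.strictConcaveOn_sqrt.concaveOn).2
    (Set.mem_Ici.2 (h0 x hx)) (Set.mem_Ici.2 (h0 y hy)) ha hb hab
  calc a • Real.sqrt (f x) + b • Real.sqrt (f y)
      ≤ Real.sqrt (a • f x + b • f y) := hsq
    _ ≤ Real.sqrt (f (a • x + b • y)) := Real.sqrt_le_sqrt (hf.2 hx hy ha hb hab)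

/-- A finite sum of concave functions is concave. -/
lemma concaveOn_finset_sum {E ι : Type*} [AddCommGroup E] [Module ℝ E]
    {s : Set E} (hs : Convex ℝ s) (t : Finset ι) {f : ι → E → ℝ}
    (hf : ∀ i ∈ t, ConcaveOn ℝ s (f i)) :
    ConcaveOn ℝ s (fun x => ∑ i ∈ t, f i x) := by
  classical
  induction t using Finset.induction with
  | empty => simpa using concaveOn_const (0 : ℝ) hs
  | insert _ _ hi ih =>
    rename_i a t'
    simp only [Finset.sum_insert hi]
    exact (hf a (Finset.mem_insert_self a t')).add
      (ih fun i hit => hf i (Finset.mem_insert_of_mem hit))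

/-- Concavity of `x ↦ 1 - ((1 + c x)²)⁻¹` in one coordinate, as a function on `Fin n → ℝ`. -/
lemma concaveOn_term (n : ℕ) (c : ℝ) (hc : 0 ≤ c) (i : Fin n) :
    ConcaveOn ℝ {p : Fin n → ℝ | ∀ j, 0 ≤ p j}
      (fun p : Fin n → ℝ => 1 - ((1 + c * p i) ^ 2)⁻¹) := by
  have hSconv : Convex ℝ {p : Fin n → ℝ | ∀ j, 0 ≤ p j} := by
    have : {p : Fin n → ℝ | ∀ j, 0 ≤ p j} = Set.pi Set.univ (fun _ => Set.Ici (0 : ℝ)) := by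
      ext p; simp [Set.mem_pi, Pi.le_def]
    rw [this]
    exact convex_pi fun j _ => convex_Ici 0
  -- affine map p ↦ 1 + c * p i
  let A : (Fin n → ℝ) →ᵃ[ℝ] ℝ :=
    AffineMap.const ℝ (Fin n → ℝ) (1 : ℝ) +
      (c • (LinearMap.proj i : (Fin n → ℝ) →ₗ[ℝ] ℝ)).toAffineMap
  have hA : ∀ p : Fin n → ℝ, A p = 1 + c * p i := fun p => rfl
  have hconv : ConvexOn ℝ (A ⁻¹' Set.Ioi 0) (fun p => (A p) ^ (-2 : ℤ)) :=
    (convexOn_zpow (-2)).comp_affineMap A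
  have hsub : {p : Fin n → ℝ | ∀ j, 0 ≤ p j} ⊆ A ⁻¹' Set.Ioi 0 := by
    intro p hp
    have : 0 ≤ c * p i := mul_nonneg hc (hp i)
    simp only [Set.mem_preimage, hA, Set.mem_Ioi]
    linarith
  have hconv' : ConvexOn ℝ {p : Fin n → ℝ | ∀ j, 0 ≤ p j} (fun p => (A p) ^ (-2 : ℤ)) :=
    hconv.subset hsub hSconv
  have hconc : ConcaveOn ℝ {p : Fin n → ℝ | ∀ j, 0 ≤ p j}
      (fun p => 1 + -((A p) ^ (-2 : ℤ))) :=
    (concaveOn_const (1 : ℝ) hSconv).add hconv'.neg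
  have heq : (fun p : Fin n → ℝ => 1 - ((1 + c * p i) ^ 2)⁻¹)
      = fun p => 1 + -((A p) ^ (-2 : ℤ)) := by
    funext p
    rw [hA p, zpow_neg, sub_eq_add_neg]
    norm_num [zpow_two, sq]
  rw [heq]
  exact hconc

/-- For `g ∈ ℝⁿ` with `gᵢ ≥ 0`, the function
`F(p) = √(∑ᵢ (1 − (1 + gᵢ pᵢ)⁻²))` is concave on the nonnegative orthant. -/
theorem sqrt_sum_dispersion_concaveOn (n : ℕ) (hn : 0 < n) (g : Fin n → ℝ)
    (hg : ∀ i, 0 ≤ g i) :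
    ConcaveOn ℝ {p : Fin n → ℝ | ∀ i, 0 ≤ p i}
      (fun p => Real.sqrt (∑ i, (1 - ((1 + g i * p i) ^ 2)⁻¹))) := by
  have hSconv : Convex ℝ {p : Fin n → ℝ | ∀ i, 0 ≤ p i} := by
    have : {p : Fin n → ℝ | ∀ i, 0 ≤ p i} = Set.pi Set.univ (fun _ => Set.Ici (0 : ℝ)) := by
      ext p; simp [Set.mem_pi, Pi.le_def]
    rw [this]
    exact convex_pi fun i _ => convex_Ici 0
  have hsum : ConcaveOn ℝ {p : Fin n → ℝ | ∀ i, 0 ≤ p i}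
      (fun p => ∑ i, (1 - ((1 + g i * p i) ^ 2)⁻¹)) :=
    concaveOn_finset_sum hSconv Finset.univ fun i _ => concaveOn_term n (g i) (hg i) i
  refine concaveOn_sqrt_comp hsum ?_
  intro p hp
  refine Finset.sum_nonneg fun i _ => ?_
  have h1 : (1 : ℝ) ≤ 1 + g i * p i := by
    have : 0 ≤ g i * p i := mul_nonneg (hg i) (hp i)
    linarith
  have h2 : (1 : ℝ) ≤ (1 + g i * p i) ^ 2 := by nlinarith
  have h3 : ((1 + g i * p i) ^ 2)⁻¹ ≤ 1 := inv_le_one_of_one_le₀ h2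
  linarith
end

section
/- Let n be a positive integer, g ∈ ℝⁿ with g_i ≥ 0 for all i, and define F(p) = √( Σ_{j=1}^n (1 − (1 + g_j p_j)^{−2}) ). Let p, p⁰ ∈ ℝⁿ with p_j ≥ 0 and p⁰_j ≥ 0 for all j, and suppose F(p⁰) > 0. Then F(p) ≤ F(p⁰) + Σ_{i=1}^n [ g_i·(1 + g_i p⁰_i)^{−3} / F(p⁰) ]·(p_i − p⁰_i), i.e., the first-order Taylor expansion of F around p⁰ globally overestimates F on the nonnegative orthant. -/
/-- The first-order Taylor expansion of
`F(p) = √(∑ⱼ (1 − (1 + gⱼ pⱼ)⁻²))` around `p⁰` globally overestimates `F` on the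
nonnegative orthant (provided `F(p⁰) > 0`). -/
theorem dispersion_taylor_overestimate (n : ℕ) (hn : 0 < n) (g : Fin n → ℝ)
    (hg : ∀ i, 0 ≤ g i) (p p0 : Fin n → ℝ) (hp : ∀ j, 0 ≤ p j) (hp0 : ∀ j, 0 ≤ p0 j)
    (hFpos : 0 < Real.sqrt (∑ j, (1 - ((1 + g j * p0 j) ^ 2)⁻¹))) :
    Real.sqrt (∑ j, (1 - ((1 + g j * p j) ^ 2)⁻¹)) ≤
      Real.sqrt (∑ j, (1 - ((1 + g j * p0 j) ^ 2)⁻¹)) +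
        ∑ i, (g i * ((1 + g i * p0 i) ^ 3)⁻¹ /
          Real.sqrt (∑ j, (1 - ((1 + g j * p0 j) ^ 2)⁻¹))) * (p i - p0 i) := by
  set s0 : ℝ := ∑ j, (1 - ((1 + g j * p0 j) ^ 2)⁻¹) with hs0def
  set s : ℝ := ∑ j, (1 - ((1 + g j * p j) ^ 2)⁻¹) with hsdef
  have hs0pos : 0 < s0 := Real.sqrt_pos.mp hFpos
  have hsnn : 0 ≤ s := by
    apply Finset.sum_nonneg
    intro j _
    have hb : (1:ℝ) ≤ 1 + g j * p j := by nlinarith [hg j, hp j]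
    have hb2 : (1:ℝ) ≤ (1 + g j * p j) ^ 2 := by nlinarith
    have : ((1 + g j * p j) ^ 2)⁻¹ ≤ 1 := by
      rw [inv_le_one_iff₀]; right; exact hb2
    linarith
  -- termwise tangent line bound
  have hterm : ∀ i : Fin n,
      (1 - ((1 + g i * p i) ^ 2)⁻¹) - (1 - ((1 + g i * p0 i) ^ 2)⁻¹)
        ≤ 2 * (g i * ((1 + g i * p0 i) ^ 3)⁻¹) * (p i - p0 i) := by
    intro i
    set a : ℝ := 1 + g i * p0 i with hadef
    set b : ℝ := 1 + g i * p i with hbdef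
    have ha : (1:ℝ) ≤ a := by nlinarith [hg i, hp0 i]
    have hb : (1:ℝ) ≤ b := by nlinarith [hg i, hp i]
    have hgd : g i * (p i - p0 i) = b - a := by rw [hadef, hbdef]; ring
    have ha0 : (0:ℝ) < a := by linarith
    have hb0 : (0:ℝ) < b := by linarith
    have key : a⁻¹ ^ 2 - b⁻¹ ^ 2 ≤ 2 * (a⁻¹ ^ 3) * (b - a) := by
      have expand : 2 * (a⁻¹ ^ 3) * (b - a) - (a⁻¹ ^ 2 - b⁻¹ ^ 2)
          = (a⁻¹ ^ 3 * b⁻¹ ^ 2) * ((b - a) ^ 2 * (2 * b + a)) := by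
        field_simp
        ring
      have hfac : (0:ℝ) ≤ (b - a) ^ 2 * (2 * b + a) := by positivity
      have h1 : a⁻¹ * a = 1 := inv_mul_cancel₀ (ne_of_gt ha0)
      have h2 : b⁻¹ * b = 1 := inv_mul_cancel₀ (ne_of_gt hb0)
      have hia : 0 < a⁻¹ := inv_pos.mpr ha0
      have hib : 0 < b⁻¹ := inv_pos.mpr hb0
      nlinarith [mul_pos hia hib, mul_pos (mul_pos hia hia) hib,
        mul_pos (mul_pos hia hia) (mul_pos hia hib),
        mul_nonneg (mul_nonneg (pow_pos hia 3).le (pow_pos hib 2).le) hfac, expand]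
    calc (1 - (b ^ 2)⁻¹) - (1 - (a ^ 2)⁻¹) = a⁻¹ ^ 2 - b⁻¹ ^ 2 := by
          rw [← inv_pow, ← inv_pow]; ring
      _ ≤ 2 * (a⁻¹ ^ 3) * (b - a) := key
      _ = 2 * (g i * (a ^ 3)⁻¹) * (p i - p0 i) := by rw [← hgd, ← inv_pow]; ring
  have hsum : s - s0 ≤ ∑ i, 2 * (g i * ((1 + g i * p0 i) ^ 3)⁻¹) * (p i - p0 i) := by
    rw [hsdef, hs0def, ← Finset.sum_sub_distrib]
    exact Finset.sum_le_sum fun i _ => hterm i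
  -- concavity of sqrt
  have hsqrt : Real.sqrt s ≤ Real.sqrt s0 + (s - s0) / (2 * Real.sqrt s0) := by
    set t := Real.sqrt s
    set t0 := Real.sqrt s0
    have ht : t ^ 2 = s := Real.sq_sqrt hsnn
    have ht0 : t0 ^ 2 = s0 := Real.sq_sqrt hs0pos.le
    have ht0pos : 0 < t0 := hFpos
    have htnn : 0 ≤ t := Real.sqrt_nonneg s
    rw [← sub_le_iff_le_add', le_div_iff₀ (by linarith), ← ht, ← ht0]
    nlinarith [sq_nonneg (t - t0)]
  have hrhs : ∑ i, (g i * ((1 + g i * p0 i) ^ 3)⁻¹ / Real.sqrt s0) * (p i - p0 i)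
      = (∑ i, 2 * (g i * ((1 + g i * p0 i) ^ 3)⁻¹) * (p i - p0 i)) / (2 * Real.sqrt s0) := by
    rw [Finset.sum_div]
    refine Finset.sum_congr rfl fun i _ => ?_
    have h0 : Real.sqrt s0 ≠ 0 := ne_of_gt hFpos
    rw [div_mul_eq_mul_div, div_eq_div_iff h0 (by positivity)]
    ring
  rw [hrhs]
  refine hsqrt.trans ?_
  gcongr
end
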